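/- If A is an n×n matrix over ℂ with ‖A‖₂ ≤ 1 and h_∞(A) = 1, then A is a permutation matrix times a unitary diagonal matrix. -/

import Mathlib

open MeasureTheory

/-- The permanent of a complex square matrix. -/
noncomputable def perm {n : ℕ} (A : Matrix (Fin n) (Fin n) ℂ) : ℂ :=
  ∑ σ : Equiv.Perm (Fin n), ∏ i, A i (σ i)

/-- The operator 2-norm of a complex square matrix. -/
noncomputable def opNorm {n : ℕ} (A : Matrix (Fin n) (Fin n) ℂ) : ℝ :=
  ‖LinearMap.toContinuousLinearMap (Matrix.toEuclideanLin A)‖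

/-- Uniform probability measure parametrizing `n` i.i.d. points of the unit circle. -/
noncomputable def circleMeasure (n : ℕ) : Measure (Fin n → ℝ) :=
  Measure.pi fun _ => volume.restrict (Set.Icc 0 1)

/-- The random vector with i.i.d. coordinates uniform on the unit circle. -/
noncomputable def Xc {n : ℕ} (θ : Fin n → ℝ) : Fin n → ℂ :=
  fun i => Complex.exp (2 * Real.pi * Complex.I * (θ i))

/-- Average of the ℓ∞-norms of the rows of A. -/
noncomputable def hInf {n : ℕ} (A : Matrix (Fin n) (Fin n) ℂ) : ℝ :=
  (∑ i, ⨆ j, ‖A i j‖) / n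

/-- Average of the ℓ₂-norms of the rows of A. -/
noncomputable def hTwo {n : ℕ} (A : Matrix (Fin n) (Fin n) ℂ) : ℝ :=
  (∑ i, Real.sqrt (∑ j, ‖A i j‖ ^ 2)) / n

/-- If `‖A‖₂ ≤ 1` and `h∞(A) = 1`, then A is a permutation matrix times a unitary
diagonal matrix. -/
theorem hInf_eq_one_extremal {n : ℕ} (A : Matrix (Fin n) (Fin n) ℂ)
    (hA : opNorm A ≤ 1) (h : hInf A = 1) :
    ∃ (σ : Equiv.Perm (Fin n)) (d : Fin n → ℂ),
      (∀ i, ‖d i‖ = 1) ∧ A = σ.permMatrix ℂ * Matrix.diagonal d := by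
  rcases Nat.eq_zero_or_pos n with hn | hn
  · subst hn
    exact ⟨1, fun i => i.elim0, fun i => i.elim0, by ext i j; exact i.elim0⟩
  have hn' : (0:ℝ) < n := by exact_mod_cast hn
  haveI : Nonempty (Fin n) := Fin.pos_iff_nonempty.mp hn
  -- the operator is a contraction
  have key : ∀ x : EuclideanSpace ℂ (Fin n), ‖Matrix.toEuclideanLin A x‖ ≤ ‖x‖ := by
    intro x
    calc ‖Matrix.toEuclideanLin A x‖
        = ‖LinearMap.toContinuousLinearMap (Matrix.toEuclideanLin A) x‖ := rfl
      _ ≤ opNorm A * ‖x‖ :=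
          (LinearMap.toContinuousLinearMap (Matrix.toEuclideanLin A)).le_opNorm x
      _ ≤ 1 * ‖x‖ := by gcongr
      _ = ‖x‖ := one_mul _
  -- coordinate bound
  have coord : ∀ (y : EuclideanSpace ℂ (Fin n)) (i : Fin n), ‖y i‖ ≤ ‖y‖ := by
    intro y i
    rw [EuclideanSpace.norm_eq,
      ← Real.sqrt_sq (norm_nonneg (y i))]
    exact Real.sqrt_le_sqrt
      (Finset.single_le_sum (f := fun j => ‖y j‖ ^ 2) (fun j _ => sq_nonneg _) (Finset.mem_univ i))
  -- row bound
  have row : ∀ i, ∑ j, ‖A i j‖ ^ 2 ≤ 1 := by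
    intro i
    set s := ∑ j, ‖A i j‖ ^ 2 with hs
    have hs0 : 0 ≤ s := Finset.sum_nonneg fun j _ => sq_nonneg _
    set x : EuclideanSpace ℂ (Fin n) :=
      (WithLp.equiv 2 _).symm (fun j => starRingEnd ℂ (A i j)) with hx
    have hxnorm : ‖x‖ = Real.sqrt s := by
      rw [EuclideanSpace.norm_eq]
      congr 1
      refine Finset.sum_congr rfl fun j _ => ?_
      simp [hx]
    have hyi : Matrix.toEuclideanLin A x i = (s : ℂ) := by
      show (Matrix.mulVec A (fun j => starRingEnd ℂ (A i j))) i = (s : ℂ)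
      simp only [Matrix.mulVec, dotProduct, Complex.mul_conj, hs]
      push_cast
      exact Finset.sum_congr rfl fun j _ => by rw [← Complex.sq_norm]; norm_cast
    have h1 : s ≤ Real.sqrt s := by
      have h2 := coord (Matrix.toEuclideanLin A x) i
      rw [hyi] at h2
      simp only [Complex.norm_real, Real.norm_eq_abs, abs_of_nonneg hs0] at h2
      calc s ≤ ‖Matrix.toEuclideanLin A x‖ := h2
        _ ≤ ‖x‖ := key x
        _ = Real.sqrt s := hxnorm
    nlinarith [Real.sq_sqrt hs0, Real.sqrt_nonneg s]
  -- column bound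
  have col : ∀ j, ∑ i, ‖A i j‖ ^ 2 ≤ 1 := by
    intro j
    set x : EuclideanSpace ℂ (Fin n) := EuclideanSpace.single j (1:ℂ) with hx
    have hxnorm : ‖x‖ = 1 := by simp [hx]
    have hy : ∀ i, Matrix.toEuclideanLin A x i = A i j := by
      intro i
      show (Matrix.mulVec A (Pi.single j (1:ℂ))) i = A i j
      simp [Matrix.mulVec_single]
    have h1 : ‖Matrix.toEuclideanLin A x‖ ≤ 1 := (key x).trans_eq hxnorm
    rw [EuclideanSpace.norm_eq] at h1
    have h2 : ∑ i, ‖Matrix.toEuclideanLin A x i‖ ^ 2 ≤ 1 := by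
      have h3 : (0:ℝ) ≤ ∑ i, ‖Matrix.toEuclideanLin A x i‖ ^ 2 :=
        Finset.sum_nonneg fun i _ => sq_nonneg _
      nlinarith [Real.sq_sqrt h3, Real.sqrt_nonneg (∑ i, ‖Matrix.toEuclideanLin A x i‖ ^ 2)]
    calc ∑ i, ‖A i j‖ ^ 2
        = ∑ i, ‖Matrix.toEuclideanLin A x i‖ ^ 2 := by
          refine Finset.sum_congr rfl fun i _ => by rw [hy i]
      _ ≤ 1 := h2
  -- each row sup is at most 1
  have sup_le : ∀ i, (⨆ j, ‖A i j‖) ≤ 1 := by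
    intro i
    refine ciSup_le fun j => ?_
    have h1 : ‖A i j‖ ^ 2 ≤ 1 :=
      le_trans (Finset.single_le_sum (f := fun k => ‖A i k‖ ^ 2) (fun k _ => sq_nonneg _) (Finset.mem_univ j)) (row i)
    nlinarith [norm_nonneg (A i j)]
  -- each row sup equals 1
  have hsum : ∑ i, (⨆ j, ‖A i j‖) = n := by
    rw [hInf, div_eq_one_iff_eq (ne_of_gt hn')] at h
    exact h
  have sup_eq : ∀ i, (⨆ j, ‖A i j‖) = 1 := by
    have heq : ∑ i : Fin n, (⨆ j, ‖A i j‖) = ∑ _i : Fin n, (1:ℝ) := by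
      rw [hsum]; simp
    have := (Finset.sum_eq_sum_iff_of_le fun i (_ : i ∈ Finset.univ) => sup_le i).mp heq
    exact fun i => this i (Finset.mem_univ i)
  have hex : ∀ i, ∃ j, ‖A i j‖ = 1 := by
    intro i
    obtain ⟨j, hj⟩ := exists_eq_ciSup_of_finite (f := fun j => ‖A i j‖)
    exact ⟨j, hj.trans (sup_eq i)⟩
  choose f hf using hex
  -- off entries vanish
  have hzero : ∀ i j, j ≠ f i → A i j = 0 := by
    intro i j hj
    have h1 := row i
    have h2 : ‖A i (f i)‖ ^ 2 = 1 := by rw [hf i]; norm_num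
    have h3 : ‖A i j‖ ^ 2 + ‖A i (f i)‖ ^ 2
        ≤ ∑ k, ‖A i k‖ ^ 2 := by
      have h4 := Finset.sum_le_sum_of_subset_of_nonneg
        (Finset.subset_univ ({j, f i} : Finset (Fin n)))
        (fun k _ _ => sq_nonneg (‖A i k‖))
      rwa [Finset.sum_pair hj] at h4
    have h5 : ‖A i j‖ = 0 := by
      nlinarith [norm_nonneg (A i j)]
    exact norm_eq_zero.mp h5
  -- f is injective
  have hinj : Function.Injective f := by
    intro a b hab
    by_contra hne
    have h1 := col (f a)
    have h2 : ‖A a (f a)‖ ^ 2 = 1 := by rw [hf a]; norm_num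
    have h3 : ‖A b (f a)‖ ^ 2 = 1 := by rw [hab, hf b]; norm_num
    have h4 : ‖A a (f a)‖ ^ 2 + ‖A b (f a)‖ ^ 2
        ≤ ∑ i, ‖A i (f a)‖ ^ 2 := by
      have h5 := Finset.sum_le_sum_of_subset_of_nonneg
        (Finset.subset_univ ({a, b} : Finset (Fin n)))
        (fun k _ _ => sq_nonneg (‖A k (f a)‖))
      rwa [Finset.sum_pair hne] at h5
    linarith
  have hbij : Function.Bijective f := Finite.injective_iff_bijective.mp hinj
  obtain ⟨g, hg⟩ : ∃ g : Fin n → Fin n, ∀ j, f (g j) = j :=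
    ⟨fun j => (hbij.2 j).choose, fun j => (hbij.2 j).choose_spec⟩
  have hperm : ∀ (τ : Equiv.Perm (Fin n)) (i j : Fin n),
      τ.permMatrix ℂ i j = if j = τ i then 1 else 0 := by
    intro τ i j
    simp [Equiv.Perm.permMatrix, PEquiv.toMatrix, Equiv.toPEquiv, Option.mem_def, eq_comm]
  refine ⟨Equiv.ofBijective f hbij, fun j => A (g j) j, fun j => ?_, ?_⟩
  · have h1 := hf (g j)
    rw [hg j] at h1
    exact h1
  · ext i j
    have hσi : (Equiv.ofBijective f hbij) i = f i := rfl
    rw [Matrix.mul_diagonal, hperm, hσi]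
    by_cases hij : j = f i
    · subst hij
      rw [if_pos rfl, one_mul]
      show A i (f i) = A (g (f i)) (f i)
      have hgi : g (f i) = i := hinj (hg (f i))
      rw [hgi]
    · rw [if_neg hij, zero_mul]
      exact hzero i j hij
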